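/- The string Fourier transform satisfies F_s^{2n} e_{\vec k} = q^{|\vec k|²} e_{\vec k} for every basis vector e_{\vec k}; that is, the 2n-th power of F_s (a '2π rotation') acts on each product basis state as multiplication by the phase q^{|\vec k|²}. -/

import Mathlib

/-- The string Fourier transform `F_s` on `n`-qudits: its `(ℓ, k)` entry equals
`d^{(1-n)/2} · ζ^{|ℓ|²} · ∏_{j₁ < j₂} q^{-ℓ_{j₁} k_{j₂}}` if `|ℓ| = |k|`, and `0` otherwise. -/
noncomputable def SFT (d n : ℕ) (q ζ : ℂ) :
    Matrix (Fin n → ZMod d) (Fin n → ZMod d) ℂ :=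
  Matrix.of fun l k =>
    if (∑ j, l j) = (∑ j, k j) then
      (Real.sqrt d : ℂ) ^ (1 - (n : ℤ)) * ζ ^ (∑ j, l j).val ^ 2 *
        ∏ p ∈ Finset.univ.filter (fun p : Fin n × Fin n => p.1 < p.2),
          q ^ (-(((l p.1).val * (k p.2).val : ℕ) : ℤ))
    else 0


namespace Stmt8
open Finset

set_option linter.unusedSectionVars false
set_option linter.unusedVariables false

noncomputable def chi (q : ℂ) {d : ℕ} (a : ZMod d) : ℂ := q ^ a.val

variable {d : ℕ} [NeZero d] {q : ℂ}

lemma val_cast (a : ZMod d) : ((a.val : ℕ) : ZMod d) = a := by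
  simp [ZMod.natCast_val, ZMod.cast_id]

lemma chi_natCast (hqd : q ^ d = 1) (m : ℕ) : chi q (m : ZMod d) = q ^ m := by
  unfold chi
  rw [ZMod.val_natCast]
  conv_rhs => rw [show m = d * (m / d) + m % d from (Nat.div_add_mod m d).symm ▸ rfl]
  rw [pow_add, pow_mul, hqd, one_pow, one_mul]

lemma chi_zero : chi q (0 : ZMod d) = 1 := by simp [chi]

lemma chi_add (hqd : q ^ d = 1) (a b : ZMod d) : chi q (a + b) = chi q a * chi q b := by
  have : a + b = ((a.val + b.val : ℕ) : ZMod d) := by push_cast [val_cast]; ring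
  rw [this, chi_natCast hqd, pow_add]; unfold chi; rfl

lemma chi_neg (hqd : q ^ d = 1) (a : ZMod d) : chi q (-a) = (chi q a)⁻¹ := by
  have h : chi q (-a) * chi q a = 1 := by rw [← chi_add hqd, neg_add_cancel, chi_zero]
  exact eq_inv_of_mul_eq_one_left h

lemma chi_intCast (hq0 : q ≠ 0) (hqd : q ^ d = 1) (z : ℤ) :
    q ^ z = chi q ((z : ZMod d)) := by
  obtain ⟨a, b, rfl⟩ : ∃ a b : ℕ, z = (a : ℤ) - b := ⟨z.toNat, (-z).toNat, by omega⟩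
  rw [zpow_sub₀ hq0, zpow_natCast, zpow_natCast]
  push_cast
  rw [sub_eq_add_neg, chi_add hqd, chi_neg hqd, chi_natCast hqd, chi_natCast hqd]
  ring

lemma chi_sum (hqd : q ^ d = 1) {ι : Type*} (S : Finset ι) (w : ι → ZMod d) :
    ∏ i ∈ S, chi q (w i) = chi q (∑ i ∈ S, w i) := by
  induction S using Finset.cons_induction with
  | empty => simp [chi_zero]
  | cons i S hi ih => rw [Finset.prod_cons, Finset.sum_cons, chi_add hqd, ih]

lemma chi_eq_one_iff (hprim : IsPrimitiveRoot q d) (a : ZMod d) :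
    chi q a = 1 ↔ a = 0 := by
  rw [chi, hprim.pow_eq_one_iff_dvd]
  constructor
  · intro h
    have hlt := a.val_lt
    have : a.val = 0 := Nat.eq_zero_of_dvd_of_lt h hlt
    exact (ZMod.val_eq_zero a).1 this
  · rintro rfl; simp

lemma chi_mul_sum (hprim : IsPrimitiveRoot q d) (a : ZMod d) :
    ∑ x : ZMod d, chi q (a * x) = if a = 0 then (d : ℂ) else 0 := by
  have hqd : q ^ d = 1 := hprim.pow_eq_one
  by_cases ha : a = 0
  · simp [ha, chi_zero, Finset.card_univ, ZMod.card]
  · rw [if_neg ha]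
    have key : ∀ x : ZMod d, chi q (a * x) = (chi q a) ^ x.val := by
      intro x
      have : a * x = ((a.val * x.val : ℕ) : ZMod d) := by push_cast [val_cast]; ring
      rw [this, chi_natCast hqd, pow_mul]; rfl
    have h1 : chi q a ≠ 1 := fun h => ha ((chi_eq_one_iff hprim a).1 h)
    have h2 : (chi q a) ^ d = 1 := by
      rw [chi, ← pow_mul, mul_comm, pow_mul, hqd, one_pow]
    calc ∑ x : ZMod d, chi q (a * x) = ∑ i ∈ Finset.range d, (chi q a) ^ i := by
          rw [Finset.sum_congr rfl fun x _ => key x]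
          exact Finset.sum_nbij' (fun x => x.val) (fun i => (i : ZMod d))
            (fun x _ => Finset.mem_range.2 x.val_lt) (fun i hi => Finset.mem_univ _)
            (fun x _ => val_cast x) (fun i hi => ZMod.val_natCast_of_lt (Finset.mem_range.1 hi))
            (fun x _ => rfl)
      _ = 0 := by rw [geom_sum_eq h1, h2]; simp

lemma sum_indicator {n : ℕ} (f : (Fin (n+1) → ZMod d) → ℂ) (c : ZMod d) :
    ∑ l : Fin (n+1) → ZMod d, (if (∑ j, l j) = c then f l else 0)
      = ∑ t : Fin n → ZMod d, f (Fin.cons (c - ∑ i, t i) t) := by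
  rw [← (Fin.consEquiv (fun _ => ZMod d)).sum_comp
      (fun l => if (∑ j, l j) = c then f l else 0)]
  rw [Fintype.sum_prod_type]
  simp only [Fin.consEquiv_apply, Fin.sum_cons]
  rw [Finset.sum_comm]
  refine Finset.sum_congr rfl fun t _ => ?_
  have h1 : ∀ x : ZMod d, (x + ∑ i, t i = c) ↔ (x = c - ∑ i, t i) := fun x =>
    ⟨fun h => by rw [← h]; ring, fun h => by rw [h]; ring⟩
  simp only [h1]
  simp [Finset.sum_ite_eq', Fin.consEquiv]

lemma constrained_sum_eq {n : ℕ} (hprim : IsPrimitiveRoot q d)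
    (g : Fin (n+1) → ZMod d) (c : ZMod d) (hg : ∀ j, g j = g 0) :
    ∑ l : Fin (n+1) → ZMod d, (if (∑ j, l j) = c then chi q (-∑ j, g j * l j) else 0)
      = (d:ℂ)^n * chi q (-(g 0 * c)) := by
  have key : ∀ l : Fin (n+1) → ZMod d, (∑ j, l j) = c →
      chi q (-∑ j, g j * l j) = chi q (-(g 0 * c)) := by
    intro l hl
    congr 1
    rw [Finset.sum_congr rfl fun j _ => by rw [hg j], ← Finset.mul_sum, hl]
  calc ∑ l : Fin (n+1) → ZMod d, (if (∑ j, l j) = c then chi q (-∑ j, g j * l j) else 0)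
      = ∑ l : Fin (n+1) → ZMod d, (if (∑ j, l j) = c then chi q (-(g 0 * c)) else 0) := by
        refine Finset.sum_congr rfl fun l _ => ?_
        by_cases h : (∑ j, l j) = c
        · rw [if_pos h, if_pos h, key l h]
        · rw [if_neg h, if_neg h]
    _ = (d:ℂ)^n * chi q (-(g 0 * c)) := by
        rw [sum_indicator (fun _ => chi q (-(g 0 * c))) c]
        simp [Finset.card_univ, ZMod.card]

lemma constrained_sum_ne {n : ℕ} (hprim : IsPrimitiveRoot q d)
    (g : Fin (n+1) → ZMod d) (c : ZMod d) (hg : ¬ ∀ j, g j = g 0) :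
    ∑ l : Fin (n+1) → ZMod d, (if (∑ j, l j) = c then chi q (-∑ j, g j * l j) else 0) = 0 := by
  have hqd : q ^ d = 1 := hprim.pow_eq_one
  push_neg at hg
  obtain ⟨j0, hj0⟩ := hg
  set δ : Fin (n+1) → ZMod d := Pi.single j0 1 - Pi.single 0 1 with hδ
  have hj0' : j0 ≠ 0 := fun h => hj0 (by rw [h])
  have hsum : (∑ j, δ j) = 0 := by
    simp [hδ, Finset.sum_sub_distrib, Pi.sub_apply, Finset.sum_pi_single]
  have hgd : (∑ j, g j * δ j) = g j0 - g 0 := by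
    simp [hδ, Pi.sub_apply, mul_sub, Finset.sum_sub_distrib, Pi.single_apply,
      mul_ite, Finset.sum_ite_eq', mul_comm]
  set F : (Fin (n+1) → ZMod d) → ℂ :=
    fun l => if (∑ j, l j) = c then chi q (-∑ j, g j * l j) else 0 with hF
  set e : ℂ := chi q (-(g j0 - g 0)) with he
  have step : ∀ l, F (l + δ) = e * F l := by
    intro l
    have h1 : (∑ j, (l + δ) j) = ∑ j, l j := by
      simp [Finset.sum_add_distrib, hsum]
    have h2 : (∑ j, g j * (l + δ) j) = (∑ j, g j * l j) + (g j0 - g 0) := by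
      simp [Pi.add_apply, mul_add, Finset.sum_add_distrib, hgd]
    by_cases h : (∑ j, l j) = c
    · rw [hF]; simp only []
      rw [if_pos (h1.trans h), if_pos h, h2, neg_add, chi_add hqd, he]
      ring
    · rw [hF]; simp only []
      rw [if_neg (h1.trans_ne h), if_neg h, mul_zero]
  have hS : ∑ l, F l = e * ∑ l, F l := by
    conv_lhs => rw [← Fintype.sum_equiv (Equiv.addRight δ) (fun l => F (l + δ)) F (fun x => rfl)]
    rw [Finset.sum_congr rfl fun l _ => step l, ← Finset.mul_sum]
  have he1 : e ≠ 1 := by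
    rw [he]
    intro h
    have := (chi_eq_one_iff hprim _).1 h
    rw [neg_eq_zero, sub_eq_zero] at this
    exact hj0 this
  have h0 : (1 - e) * (∑ l, F l) = 0 := by
    rw [sub_mul, one_mul, ← hS, sub_self]
  rcases mul_eq_zero.1 h0 with h | h
  · exact absurd (sub_eq_zero.1 h).symm he1
  · exact h



def gfun {n : ℕ} (m k : Fin n → ZMod d) (j : Fin n) : ZMod d :=
  (∑ i ∈ univ.filter (· < j), m i) + ∑ i ∈ univ.filter (j < ·), k i

lemma pair_sum_left {n : ℕ} (f h : Fin n → ZMod d) :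
    ∑ p ∈ univ.filter (fun p : Fin n × Fin n => p.1 < p.2), f p.1 * h p.2
      = ∑ j, (∑ i ∈ univ.filter (· < j), f i) * h j := by
  rw [Finset.sum_filter, Fintype.sum_prod_type, Finset.sum_comm]
  refine Finset.sum_congr rfl fun j _ => ?_
  rw [Finset.sum_mul, Finset.sum_filter]

lemma pair_sum_right {n : ℕ} (f h : Fin n → ZMod d) :
    ∑ p ∈ univ.filter (fun p : Fin n × Fin n => p.1 < p.2), f p.1 * h p.2
      = ∑ j, f j * (∑ i ∈ univ.filter (j < ·), h i) := by
  rw [Finset.sum_filter, Fintype.sum_prod_type]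
  refine Finset.sum_congr rfl fun j _ => ?_
  rw [Finset.mul_sum, Finset.sum_filter]

lemma gdiff {n : ℕ} (m k : Fin (n+1) → ZMod d) (j : Fin n) :
    gfun m k j.succ + k j.succ = gfun m k j.castSucc + m j.castSucc := by
  have h1 : univ.filter (· < j.succ) = insert j.castSucc (univ.filter (· < j.castSucc)) := by
    ext i; simp [Fin.lt_def, Fin.ext_iff]; omega
  have h2 : univ.filter (j.castSucc < ·) = insert j.succ (univ.filter (j.succ < ·)) := by
    ext i; simp [Fin.lt_def, Fin.ext_iff]; omega
  have m1 : j.castSucc ∉ univ.filter (· < j.castSucc) := by simp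
  have m2 : j.succ ∉ univ.filter (j.succ < ·) := by simp
  unfold gfun
  rw [h1, h2, Finset.sum_insert m1, Finset.sum_insert m2]
  abel

lemma g0 {n : ℕ} (m k : Fin (n+1) → ZMod d) :
    gfun m k 0 = (∑ j, k j) - k 0 := by
  have h1 : univ.filter (· < (0 : Fin (n+1))) = ∅ := by
    ext i; simp [Fin.lt_def]
  have h2 : univ.filter ((0 : Fin (n+1)) < ·) = univ.erase 0 := by
    ext i; simp [Fin.pos_iff_ne_zero]
  unfold gfun
  rw [h1, h2, Finset.sum_empty, zero_add, eq_sub_iff_add_eq, Finset.sum_erase_add _ _ (mem_univ 0)]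

lemma g_all_eq_iff {n : ℕ} (m k : Fin (n+1) → ZMod d) (hc : (∑ j, m j) = ∑ j, k j) :
    (∀ j, gfun m k j = gfun m k 0) ↔ m = fun j => k (j + 1) := by
  constructor
  · intro hall
    have hcast : ∀ i : Fin n, m i.castSucc = k i.succ := by
      intro i
      have h := gdiff m k i
      rw [hall i.succ, hall i.castSucc] at h
      exact (add_left_cancel h).symm
    have hlast : m (Fin.last n) = k 0 := by
      rw [Fin.sum_univ_castSucc m, Fin.sum_univ_succ k] at hc
      rw [Finset.sum_congr rfl fun i _ => hcast i] at hc
      linear_combination hc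
    funext j
    by_cases hj : j = Fin.last n
    · rw [hj, Fin.last_add_one, hlast]
    · obtain ⟨i, rfl⟩ : ∃ i : Fin n, j = i.castSucc :=
        ⟨j.castPred hj, (Fin.castSucc_castPred j hj).symm⟩
      rw [hcast i, Fin.coeSucc_eq_succ]
  · rintro rfl
    intro j
    induction j using Fin.induction with
    | zero => rfl
    | succ i ih =>
      have h := gdiff (fun j => k (j + 1)) k i
      rw [Fin.coeSucc_eq_succ] at h
      linear_combination h + ih

lemma sum_shift {n : ℕ} [NeZero n] (k : Fin n → ZMod d) :
    ∑ j : Fin n, k (j + 1) = ∑ j, k j :=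
  Fintype.sum_equiv (Equiv.addRight 1) _ _ (fun j => rfl)

lemma prod_q_pow (hq0 : q ≠ 0) (hqd : q ^ d = 1) {ι : Type*} (S : Finset ι)
    (u v : ι → ZMod d) :
    ∏ p ∈ S, q ^ (-(((u p).val * (v p).val : ℕ) : ℤ)) = chi q (-∑ p ∈ S, u p * v p) := by
  have each : ∀ p, q ^ (-(((u p).val * (v p).val : ℕ) : ℤ)) = chi q (-(u p * v p)) := by
    intro p
    rw [chi_intCast hq0 hqd]
    congr 1
    push_cast [val_cast]
    ring
  rw [Finset.prod_congr rfl fun p _ => each p, chi_sum hqd, ← Finset.sum_neg_distrib]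

lemma mul_entry {n' : ℕ} (hprim : IsPrimitiveRoot q d) {ζ : ℂ} (hζ2 : ζ ^ 2 = q)
    (m k : Fin (n'+1) → ZMod d) :
    (SFT d (n'+1) q ζ * SFT d (n'+1) q ζ) m k
      = if m = (fun j => k (j + 1)) then chi q ((∑ j, k j) * k 0) else 0 := by
  have hqd : q ^ d = 1 := hprim.pow_eq_one
  have hq0 : q ≠ 0 := by
    intro h; rw [h, zero_pow (NeZero.ne d)] at hqd; exact zero_ne_one hqd
  rw [Matrix.mul_apply]
  set ck := ∑ j, k j with hckdef
  by_cases hc : (∑ j, m j) = ck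
  · set s : ℂ := ((Real.sqrt d : ℝ) : ℂ) ^ (1 - ((n'+1 : ℕ) : ℤ)) with hs
    have hterm : ∀ l : Fin (n'+1) → ZMod d,
        SFT d (n'+1) q ζ m l * SFT d (n'+1) q ζ l k
          = if (∑ j, l j) = ck then
              (s^2 * q^(ck.val^2)) * chi q (-∑ j, gfun m k j * l j) else 0 := by
      intro l
      simp only [SFT, Matrix.of_apply]
      by_cases h : (∑ j, l j) = ck
      · rw [if_pos (hc.trans h.symm), if_pos (h.trans hckdef), if_pos h]
        rw [prod_q_pow hq0 hqd, prod_q_pow hq0 hqd]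
        rw [hc, h]
        rw [pair_sum_left m l, pair_sum_right l k]
        have hchi : chi q (-∑ j, (∑ i ∈ univ.filter (· < j), m i) * l j)
            * chi q (-∑ j, l j * (∑ i ∈ univ.filter (j < ·), k i))
            = chi q (-∑ j, gfun m k j * l j) := by
          rw [← chi_add hqd]
          congr 1
          rw [← neg_add, ← Finset.sum_add_distrib]
          congr 1
          refine Finset.sum_congr rfl fun j _ => ?_
          unfold gfun; ring
        have hζ : ζ ^ (ck.val^2) * ζ ^ (ck.val^2) = q ^ (ck.val^2) := by
          rw [← pow_add, ← two_mul, pow_mul, hζ2]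
        calc s * ζ ^ ck.val^2 * chi q (-∑ j, (∑ i ∈ univ.filter (· < j), m i) * l j)
              * (s * ζ ^ ck.val^2 * chi q (-∑ j, l j * (∑ i ∈ univ.filter (j < ·), k i)))
            = s^2 * (ζ ^ ck.val^2 * ζ ^ ck.val^2)
              * (chi q (-∑ j, (∑ i ∈ univ.filter (· < j), m i) * l j)
                * chi q (-∑ j, l j * (∑ i ∈ univ.filter (j < ·), k i))) := by ring
          _ = s^2 * q^(ck.val^2) * chi q (-∑ j, gfun m k j * l j) := by
              rw [hζ, hchi]
      · rw [if_neg (fun hh : (∑ j, l j) = ∑ j, k j => h (hh.trans hckdef.symm)), mul_zero,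
          if_neg h]
    rw [Finset.sum_congr rfl fun l _ => hterm l]
    have hpull : (∑ l : Fin (n'+1) → ZMod d, if (∑ j, l j) = ck then
          (s^2 * q^(ck.val^2)) * chi q (-∑ j, gfun m k j * l j) else 0)
        = (s^2 * q^(ck.val^2)) * ∑ l : Fin (n'+1) → ZMod d,
            (if (∑ j, l j) = ck then chi q (-∑ j, gfun m k j * l j) else 0) := by
      rw [Finset.mul_sum]
      exact Finset.sum_congr rfl fun l _ => by split_ifs <;> simp
    rw [hpull]
    have h2 : q ^ (ck.val^2) = chi q (ck * ck) := by
      have : ck * ck = ((ck.val * ck.val : ℕ) : ZMod d) := by push_cast [val_cast]; ring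
      rw [this, chi_natCast hqd]
      congr 1
      exact pow_two _
    have h1 : s^2 * (d:ℂ)^n' = 1 := by
      have hsd : ((Real.sqrt d : ℝ) : ℂ)^2 = (d:ℂ) := by
        rw [← Complex.ofReal_pow, Real.sq_sqrt (by positivity)]; simp
      have hsne : ((Real.sqrt d : ℝ) : ℂ) ≠ 0 :=
        Complex.ofReal_ne_zero.2 (ne_of_gt (Real.sqrt_pos.2 (by exact_mod_cast NeZero.pos d)))
      have e1 : (1 - ((n'+1 : ℕ) : ℤ)) = -n' := by push_cast; ring
      rw [hs, e1, ← zpow_natCast _ 2, ← zpow_mul]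
      have e2 : ((-n' : ℤ)) * (2:ℕ) = -(2 * n' : ℕ) := by push_cast; ring
      rw [e2, zpow_neg, zpow_natCast, pow_mul, hsd]
      exact inv_mul_cancel₀ (pow_ne_zero _ (Nat.cast_ne_zero.2 (NeZero.ne d)))
    by_cases hmk : m = fun j => k (j + 1)
    · have hall : ∀ j, gfun m k j = gfun m k 0 := (g_all_eq_iff m k hc).2 hmk
      rw [constrained_sum_eq hprim _ ck hall, g0, if_pos hmk]
      have h3 : chi q (ck * ck) * chi q (-((ck - k 0) * ck)) = chi q (ck * k 0) := by
        rw [← chi_add hqd]; congr 1; ring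
      calc s^2 * q^(ck.val^2) * ((d:ℂ)^n' * chi q (-((ck - k 0) * ck)))
          = (s^2 * (d:ℂ)^n') * (q^(ck.val^2) * chi q (-((ck - k 0) * ck))) := by ring
        _ = chi q (ck * k 0) := by rw [h1, one_mul, h2, h3]
    · have hnall : ¬ ∀ j, gfun m k j = gfun m k 0 := fun h => hmk ((g_all_eq_iff m k hc).1 h)
      rw [constrained_sum_ne hprim _ ck hnall, mul_zero, if_neg hmk]
  · have hterm : ∀ l : Fin (n'+1) → ZMod d,
        SFT d (n'+1) q ζ m l * SFT d (n'+1) q ζ l k = 0 := by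
      intro l
      simp only [SFT, Matrix.of_apply]
      by_cases h1 : (∑ j, m j) = ∑ j, l j
      · by_cases h2 : (∑ j, l j) = ∑ j, k j
        · exact absurd (h1.trans (h2.trans hckdef.symm)) hc
        · rw [if_neg h2, mul_zero]
      · rw [if_neg h1, zero_mul]
    rw [Finset.sum_congr rfl fun l _ => hterm l, Finset.sum_const_zero]
    rw [if_neg]
    intro hmk
    apply hc
    rw [hmk]
    simpa using sum_shift k

/-- cyclic left shift -/
def shf {n : ℕ} [NeZero n] (k : Fin n → ZMod d) : Fin n → ZMod d := fun j => k (j + 1)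

lemma sum_shf {n : ℕ} [NeZero n] (k : Fin n → ZMod d) : ∑ j, shf k j = ∑ j, k j :=
  sum_shift k

open Fin.NatCast in
lemma shf_iterate {n : ℕ} (k : Fin (n+1) → ZMod d) (t : ℕ) (j : Fin (n+1)) :
    (shf^[t] k) j = k (j + (t : Fin (n+1))) := by
  induction t generalizing k j with
  | zero => simp
  | succ t ih =>
    rw [Function.iterate_succ_apply, ih (shf k) j]
    show k ((j + (t : Fin (n+1))) + 1) = _
    congr 1
    push_cast
    simp only [Nat.cast_succ, add_assoc]

open Fin.NatCast in
lemma shf_iterate_self {n : ℕ} (k : Fin (n+1) → ZMod d) : shf^[n+1] k = k := by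
  funext j
  rw [shf_iterate, Fin.natCast_self, add_zero]

noncomputable def Pm (q : ℂ) (d n : ℕ) [NeZero d] [NeZero n] :
    Matrix (Fin n → ZMod d) (Fin n → ZMod d) ℂ :=
  Matrix.of fun m k => if m = shf k then chi q ((∑ j, k j) * k 0) else 0

lemma Pm_mulVec {n : ℕ} [NeZero n] (k : Fin n → ZMod d) :
    (Pm q d n).mulVec (fun m => if m = k then (1:ℂ) else 0)
      = chi q ((∑ j, k j) * k 0) • (fun m => if m = shf k then (1:ℂ) else 0) := by
  funext m
  simp only [Matrix.mulVec, dotProduct, Pm, Matrix.of_apply, Pi.smul_apply, smul_eq_mul]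
  rw [Finset.sum_congr rfl (fun l _ => by
    rw [mul_ite, mul_one, mul_zero] :
      ∀ l ∈ Finset.univ, (if m = shf l then chi q ((∑ j, l j) * l 0) else 0) *
        (if l = k then (1:ℂ) else 0) = if l = k then (if m = shf l then chi q ((∑ j, l j) * l 0) else 0) else 0)]
  rw [Finset.sum_ite_eq' Finset.univ k
    (fun l => if m = shf l then chi q ((∑ j, l j) * l 0) else 0)]
  simp only [Finset.mem_univ, if_true]
  split_ifs with h
  · rw [mul_one]
  · rw [mul_zero]

lemma sum_shf_iterate {n : ℕ} (t : ℕ) (k : Fin (n+1) → ZMod d) :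
    ∑ j, (shf^[t] k) j = ∑ j, k j := by
  induction t with
  | zero => rfl
  | succ t ih2 => rw [Function.iterate_succ_apply', sum_shf, ih2]

lemma Pm_pow_mulVec (hqd : q ^ d = 1) {n : ℕ} (t : ℕ) (k : Fin (n+1) → ZMod d) :
    ((Pm q d (n+1)) ^ t).mulVec (fun m => if m = k then (1:ℂ) else 0)
      = chi q ((∑ j, k j) * (∑ i ∈ Finset.range t, (shf^[i] k) 0)) •
          (fun m => if m = shf^[t] k then (1:ℂ) else 0) := by
  induction t generalizing k with
  | zero => simp [chi_zero]; rfl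
  | succ t ih =>
    rw [pow_succ', ← Matrix.mulVec_mulVec, ih k, Matrix.mulVec_smul]
    rw [Pm_mulVec (shf^[t] k), sum_shf_iterate]
    rw [smul_smul, ← chi_add hqd, ← mul_add]
    rw [Finset.sum_range_succ, Function.iterate_succ_apply']

end Stmt8

/-- `F_s^{2n} e_{\vec k} = q^{|\vec k|²} e_{\vec k}` for every product basis
vector `e_{\vec k}`: the `2n`-th power of `F_s` (a "2π rotation") acts on each product basis
state as multiplication by the phase `q^{|\vec k|²}`. -/
theorem stmt_8 (d n : ℕ) [NeZero d] (hn : 1 ≤ n) (q ζ : ℂ)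
    (hq : q = Complex.exp (2 * Real.pi * Complex.I / d))
    (hζ2 : ζ ^ 2 = q) (hζd : ζ ^ d ^ 2 = 1) (k : Fin n → ZMod d) :
    (SFT d n q ζ ^ (2 * n)).mulVec (fun m => if m = k then 1 else 0)
      = q ^ (∑ j, k j).val ^ 2 •
          (fun m : Fin n → ZMod d => if m = k then (1 : ℂ) else 0) := by
  obtain ⟨n', rfl⟩ : ∃ n', n = n' + 1 := ⟨n - 1, by omega⟩
  have hprim : IsPrimitiveRoot q d := hq ▸ Complex.isPrimitiveRoot_exp d (NeZero.ne d)
  have hqd : q ^ d = 1 := hprim.pow_eq_one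
  have key : SFT d (n'+1) q ζ * SFT d (n'+1) q ζ = Stmt8.Pm q d (n'+1) :=
    Matrix.ext fun m k => Stmt8.mul_entry hprim hζ2 m k
  rw [pow_mul, sq, key, Stmt8.Pm_pow_mulVec hqd (n'+1) k, Stmt8.shf_iterate_self]
  congr 1
  have hsum : ∑ i ∈ Finset.range (n'+1), (Stmt8.shf^[i] k) 0 = ∑ j, k j := by
    rw [Finset.sum_congr rfl fun i hi => by
      rw [Stmt8.shf_iterate k i 0, zero_add]]
    open Fin.NatCast in rw [← Fin.sum_univ_eq_sum_range (fun i => k (i : Fin (n'+1))) (n'+1)]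
    open Fin.NatCast in exact Finset.sum_congr rfl fun j _ => by rw [Fin.cast_val_eq_self]
  rw [hsum]
  have : (∑ j, k j) * (∑ j, k j) = (((∑ j, k j).val * (∑ j, k j).val : ℕ) : ZMod d) := by
    push_cast [Stmt8.val_cast]; ring
  rw [this, Stmt8.chi_natCast hqd]
  congr 1
  exact (pow_two _).symm
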